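/- For any base β ≥ 2: if x ∈ F satisfies x² ≥ ν and all roundings are to nearest, then fl(|x| / fl(√(fl(x²)))) ≤ 1. -/

import Mathlib

noncomputable section
set_option maxHeartbeats 1000000


/-- The set of positive normal floating point numbers with exponent `e`. -/
def Eset (β μ : ℕ) (e : ℤ) : Set ℝ :=
  {x | ∃ r : ℕ, r < (β - 1) * β ^ μ ∧ x = (β : ℝ) ^ e * ((β : ℝ) ^ μ + r)}

/-- Perfect floating point system: all integer exponents. -/
def PerfectF (β μ : ℕ) : Set ℝ :=
  {x | x = 0 ∨ ∃ e : ℤ, x ∈ Eset β μ e ∨ -x ∈ Eset β μ e}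

/-- MPFR system: exponents bounded below by `emin`, no subnormals. -/
def MPFRF (β μ : ℕ) (emin : ℤ) : Set ℝ :=
  {x | x = 0 ∨ ∃ e : ℤ, emin ≤ e ∧ (x ∈ Eset β μ e ∨ -x ∈ Eset β μ e)}

/-- Subnormal numbers (both signs) for minimal exponent `emin`. -/
def SubN (β μ : ℕ) (emin : ℤ) : Set ℝ :=
  {x | ∃ r : ℕ, 1 ≤ r ∧ r < β ^ μ ∧ (x = (β : ℝ) ^ emin * r ∨ x = -((β : ℝ) ^ emin * r))}

/-- IEEE system: MPFR system augmented with subnormal numbers. -/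
def IEEEF (β μ : ℕ) (emin : ℤ) : Set ℝ := MPFRF β μ emin ∪ SubN β μ emin

/-- `fl` rounds to nearest in `F`. -/
def RTN (F : Set ℝ) (fl : ℝ → ℝ) : Prop :=
  ∀ z : ℝ, fl z ∈ F ∧ ∀ x ∈ F, |fl z - z| ≤ |x - z|

/-- Recursively rounded sum: `rsum fl y 0 = y 0`,
`rsum fl y (k+1) = fl (k+1) (rsum fl y k + y (k+1))`. -/
def rsum (fl : ℕ → ℝ → ℝ) (y : ℕ → ℝ) : ℕ → ℝ
  | 0 => y 0
  | k + 1 => fl (k + 1) (rsum fl y k + y (k + 1))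

/-- Ties are broken downward. -/
def BreaksTiesDown (F : Set ℝ) (fl : ℝ → ℝ) : Prop :=
  ∀ z : ℝ, ∀ x ∈ F, |x - z| = |fl z - z| → fl z ≤ x

/-- Ties are broken upward. -/
def BreaksTiesUp (F : Set ℝ) (fl : ℝ → ℝ) : Prop :=
  ∀ z : ℝ, ∀ x ∈ F, |x - z| = |fl z - z| → x ≤ fl z

section RTNlemmas

variable {F : Set ℝ} {fl : ℝ → ℝ}

lemma RTN.le_fl (h : RTN F fl) {f z : ℝ} (hf : f ∈ F) (hfz : f ≤ z) : f ≤ fl z := by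
  have h1 := (h z).2 f hf
  have h2 : |f - z| = z - f := by rw [abs_sub_comm]; exact abs_of_nonneg (by linarith)
  have h3 : z - fl z ≤ |fl z - z| := by rw [abs_sub_comm]; exact le_abs_self _
  linarith

lemma RTN.fl_le (h : RTN F fl) {f z : ℝ} (hf : f ∈ F) (hzf : z ≤ f) : fl z ≤ f := by
  have h1 := (h z).2 f hf
  have h2 : |f - z| = f - z := abs_of_nonneg (by linarith)
  have h3 : fl z - z ≤ |fl z - z| := le_abs_self _
  linarith

lemma RTN.fl_eq (h : RTN F fl) {z : ℝ} (hz : z ∈ F) : fl z = z := by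
  have h1 := (h z).2 z hz
  simp only [sub_self, abs_zero] at h1
  have := abs_nonneg (fl z - z)
  have h2 : |fl z - z| = 0 := le_antisymm h1 this
  have := abs_eq_zero.1 h2
  linarith [sub_eq_zero.1 this]

lemma RTN.lower (h : RTN F fl) {f g z : ℝ} (hf : f ∈ F) (hg : g ∈ F)
    (hfz : f ≤ z) (hzg : z ≤ g) : z - fl z ≤ (g - f) / 2 := by
  have h1 := (h z).2 f hf
  have h2 := (h z).2 g hg
  have e1 : |f - z| = z - f := by rw [abs_sub_comm]; exact abs_of_nonneg (by linarith)
  have e2 : |g - z| = g - z := abs_of_nonneg (by linarith)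
  have h3 : z - fl z ≤ |fl z - z| := by rw [abs_sub_comm]; exact le_abs_self _
  linarith

lemma RTN.midpoint (h : RTN F fl) {f z : ℝ} (hf : f ∈ F) (hlt : fl z < f) :
    z ≤ (fl z + f) / 2 := by
  by_contra hcon
  push_neg at hcon
  have h1 := (h z).2 f hf
  rcases abs_cases (f - z) with ⟨e1, _⟩ | ⟨e1, _⟩ <;>
    rcases abs_cases (fl z - z) with ⟨e2, _⟩ | ⟨e2, _⟩ <;> linarith

end RTNlemmas

section EsetLemmas

variable {β μ : ℕ}

lemma pow_split (hβ : 2 ≤ β) : (β - 1) * β ^ μ + β ^ μ = β ^ (μ + 1) := by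
  have h3 : (β - 1) + 1 = β := by omega
  calc (β - 1) * β ^ μ + β ^ μ = ((β - 1) + 1) * β ^ μ := by ring
  _ = β ^ (μ+1) := by rw [h3]; ring

lemma mem_Eset_of (hβ : 2 ≤ β) {e : ℤ} {n : ℕ} (h1 : β ^ μ ≤ n) (h2 : n < β ^ (μ + 1)) :
    ((β : ℝ) ^ e * n) ∈ Eset β μ e := by
  refine ⟨n - β ^ μ, ?_, ?_⟩
  · have := pow_split (μ := μ) hβ; omega
  · have hc : ((n - β ^ μ : ℕ) : ℝ) = (n : ℝ) - (β : ℝ) ^ μ := by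
      push_cast [h1]; ring
    rw [hc]; ring

lemma Eset_spec (hβ : 2 ≤ β) {e : ℤ} {y : ℝ} (hy : y ∈ Eset β μ e) :
    ∃ n : ℕ, β ^ μ ≤ n ∧ n < β ^ (μ + 1) ∧ y = (β : ℝ) ^ e * n := by
  obtain ⟨r, hr, hyr⟩ := hy
  refine ⟨β ^ μ + r, by omega, ?_, ?_⟩
  · have := pow_split (μ := μ) hβ; omega
  · rw [hyr]; push_cast; ring

lemma Eset_pos (hβ : 2 ≤ β) {e : ℤ} {y : ℝ} (hy : y ∈ Eset β μ e) : 0 < y := by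
  obtain ⟨n, hn1, _, hne⟩ := Eset_spec hβ hy
  have hb0 : (0:ℝ) < (β:ℝ) ^ e := zpow_pos (by positivity) _
  have hn0 : 0 < n := lt_of_lt_of_le (Nat.pow_pos (by omega : 0 < β)) hn1
  rw [hne]
  have : (0:ℝ) < (n:ℝ) := by exact_mod_cast hn0
  positivity

end EsetLemmas
set_option maxHeartbeats 1000000

/-- Key integer inequality. -/
lemma arith_key (b P S M : ℤ) (hb : 2 ≤ b) (hPb : b ≤ P) (hSP : P ≤ S) (hSM : S < M)
    (hM2 : b * P ^ 2 < M ^ 2) (hstar : 4 * M ^ 2 ≤ (2 * S + 1) ^ 2 + 2 * (b * P)) :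
    2 * P * M < 2 * P * S + S := by
  by_contra hcon
  push_neg at hcon
  obtain ⟨D, hD1, hMD⟩ : ∃ D : ℤ, 1 ≤ D ∧ M = S + D := ⟨M - S, by omega, by ring⟩
  subst hMD
  -- basic consequences
  have ha : 8 * S * D + 4 * D ^ 2 ≤ 4 * S + 1 + 2 * b * P := by nlinarith [hstar]
  have hconD : S ≤ 2 * P * D := by nlinarith [hcon]
  have hP2 : 2 ≤ P := le_trans hb hPb
  -- 4 P (2D-1) + 3 ≤ 2 b P
  have hdb0 : 4 * P * (2 * D - 1) + 3 ≤ 2 * b * P := by nlinarith [ha, hSP, hD1]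
  have hdb : 2 * (2 * D - 1) < b := by
    have h1 : (2 * P) * (2 * (2 * D - 1)) < (2 * P) * b := by nlinarith [hdb0]
    exact lt_of_mul_lt_mul_left h1 (by linarith)
  by_cases hD : D = 1
  · subst hD
    -- ha : 8S + 4 ≤ 4S + 1 + 2bP  =>  4S + 3 ≤ 2bP
    have ha' : 4 * S + 3 ≤ 2 * b * P := by linarith
    have hcon' : S ≤ 2 * P := by linarith [hconD]
    have hbP : b * P ^ 2 ≤ 4 * P ^ 2 + 4 * P := by nlinarith [hM2, hcon']
    have hb45 : b = 3 ∨ b = 4 ∨ 5 ≤ b := by omega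
    rcases hb45 with hb3 | hb4 | hb5
    · subst hb3
      -- 4S ≤ 6P - 3 ; (S+1)^2 > 3 P^2
      nlinarith [hM2, ha', hP2, sq_nonneg (2*S+2-3*P)]
    · subst hb4
      have hS2P : S ≤ 2 * P - 1 := by omega
      nlinarith [hM2, hS2P, hSP]
    · nlinarith [hbP, hPb, hb5, hP2]
  · have hD2 : 2 ≤ D := by omega
    -- hV etc.
    have h1 : (S + D) ^ 2 ≤ (2 * P * D + D) ^ 2 := by nlinarith [hconD, hSP, hP2, hD1]
    have h4b : 4 * b < 25 * D ^ 2 := by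
      have h2 : 4 * (2 * P + 1) ^ 2 ≤ 25 * P ^ 2 := by nlinarith [hP2]
      have e1 : 4 * (S + D) ^ 2 ≤ 4 * (D ^ 2 * (2 * P + 1) ^ 2) := by nlinarith [h1]
      have e2 : D ^ 2 * (4 * (2 * P + 1) ^ 2) ≤ D ^ 2 * (25 * P ^ 2) :=
        mul_le_mul_of_nonneg_left h2 (sq_nonneg D)
      have h3 : (4 * b) * P ^ 2 < (25 * D ^ 2) * P ^ 2 := by nlinarith [hM2, e1, e2]
      exact lt_of_mul_lt_mul_right h3 (sq_nonneg P)
    have h36b : 36 * b + 1 ≤ 100 * (2 * D - 1) ^ 2 := by nlinarith [h4b, hD2]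
    -- hW
    have hWa : 4 * (2 * D - 1) * (S + D) ≤ 2 * b * P + (2 * D - 1) ^ 2 := by nlinarith [ha]
    have hWa0 : 0 ≤ 4 * (2 * D - 1) * (S + D) := by nlinarith [hD1, hSP, hP2]
    have hWsq : (4 * (2 * D - 1) * (S + D)) ^ 2 ≤ (2 * b * P + (2 * D - 1) ^ 2) ^ 2 :=
      pow_le_pow_left₀ hWa0 hWa 2
    have hW : 16 * (2 * D - 1) ^ 2 * (b * P ^ 2 + 1) ≤ (2 * b * P + (2 * D - 1) ^ 2) ^ 2 := by
      nlinarith [hWsq, hM2, sq_nonneg (2 * D - 1)]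
    -- final pieces
    have hd2b : 2 * (2 * D - 1) < b := hdb
    have h4d : 4 * (2 * D - 1) ^ 2 ≤ b * P := by nlinarith [hd2b, hPb, hb]
    have k1 : 36 * b * (b * P ^ 2) ≤ (100 * (2 * D - 1) ^ 2 - 1) * (b * P ^ 2) := by
      have hbP2 : (0:ℤ) ≤ b * P ^ 2 := by positivity
      nlinarith [mul_le_mul_of_nonneg_right (by linarith [h36b] : 36 * b ≤ 100 * (2*D-1)^2 - 1) hbP2]
    have k2 : 36 * (b * P * (2 * D - 1) ^ 2) ≤ 18 * (b * P ^ 2 * (2 * D - 1) ^ 2) := by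
      have : (0:ℤ) ≤ 18 * b * P * (2 * D - 1) ^ 2 * (P - 2) := by
        have h0 : (0:ℤ) ≤ 18 * b * P := by nlinarith
        have := sq_nonneg (2 * D - 1)
        nlinarith [mul_nonneg (mul_nonneg h0 this) (by linarith : (0:ℤ) ≤ P - 2)]
      nlinarith [this]
    have k3 : 36 * (2 * D - 1) ^ 4 ≤ 5 * ((2 * D - 1) ^ 2 * b * P ^ 2) := by
      have hsq : (0:ℤ) ≤ (2 * D - 1) ^ 2 := sq_nonneg _
      have s1 : 36 * (2 * D - 1) ^ 4 ≤ 9 * ((2 * D - 1) ^ 2 * (b * P)) := by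
        nlinarith [mul_le_mul_of_nonneg_left h4d hsq]
      have s2 : 9 * ((2 * D - 1) ^ 2 * (b * P)) ≤ 5 * ((2 * D - 1) ^ 2 * b * P ^ 2) := by
        have h0 : (0:ℤ) ≤ (2 * D - 1) ^ 2 * b := mul_nonneg hsq (by linarith)
        have h1 : (0:ℤ) ≤ P * (5 * P - 9) := mul_nonneg (by linarith) (by linarith)
        nlinarith [mul_nonneg h0 h1]
      linarith
    -- contradiction
    have hq1 : (0:ℤ) < (2 * D - 1) ^ 2 := pow_pos (by omega) 2
    have pos1 : (0:ℤ) < (2 * D - 1) ^ 2 * b * P ^ 2 :=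
      mul_pos (mul_pos hq1 (by linarith)) (by positivity)
    have q3 : (0:ℤ) ≤ b * P ^ 2 := by positivity
    linarith [hW, k1, k2, k3, pos1, hq1.le, q3]

section StarBound

variable {β μ : ℕ}

lemma star_bound (hβ : 2 ≤ β) (F : Set ℝ) (fl1 fl2 : ℝ → ℝ)
    (hfl1 : RTN F fl1) (hfl2 : RTN F fl2) (e EK : ℤ) (M S K : ℕ)
    (hEK : (β:ℝ) ^ EK = (β:ℝ) ^ (2*e) * (K:ℝ))
    (hK0 : 0 < K)
    (hmemK : ∀ n : ℕ, β ^ μ ≤ n → n ≤ β ^ (μ+1) → ((β:ℝ) ^ EK * n) ∈ F)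
    (hmemE : ∀ n : ℕ, β ^ μ ≤ n → n ≤ β ^ (μ+1) → ((β:ℝ) ^ e * n) ∈ F)
    (hlow : K * β ^ μ ≤ M ^ 2) (hhigh : M ^ 2 < K * β ^ (μ+1))
    (hS1 : β ^ μ ≤ S) (hS2 : S + 1 ≤ β ^ (μ+1))
    (hseq : fl2 (Real.sqrt (fl1 ((β:ℝ) ^ (2*e) * (M:ℝ) ^ 2))) = (β:ℝ) ^ e * S) :
    4 * M ^ 2 ≤ (2*S+1) ^ 2 + 2 * K := by
  have hb0 : (β:ℝ) ≠ 0 := by positivity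
  have hbR : (0:ℝ) < (β:ℝ) := by positivity
  have hB : (0:ℝ) < (β:ℝ) ^ (2*e) := zpow_pos hbR _
  have hA : (0:ℝ) < (β:ℝ) ^ e := zpow_pos hbR _
  set a : ℝ := (β:ℝ) ^ (2*e) * (M:ℝ) ^ 2 with ha_def
  set q : ℕ := M ^ 2 / K with hq_def
  have hq1 : β ^ μ ≤ q := (Nat.le_div_iff_mul_le hK0).2 (by rw [mul_comm]; exact hlow)
  have hq2 : q < β ^ (μ+1) := Nat.div_lt_of_lt_mul hhigh
  have hfm : K * q ≤ M ^ 2 := by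
    have := Nat.div_mul_le_self (M ^ 2) K
    rw [mul_comm]; exact this
  have hgm : M ^ 2 < K * (q + 1) := by
    have h1 := Nat.div_add_mod (M ^ 2) K
    rw [← hq_def] at h1
    have h2 := Nat.mod_lt (M ^ 2) hK0
    have h3 : K * (q+1) = K * q + K := by ring
    omega
  -- floats around a
  have hfF : ((β:ℝ) ^ EK * q) ∈ F := hmemK q hq1 hq2.le
  have hgF : ((β:ℝ) ^ EK * (q+1:ℕ)) ∈ F := hmemK (q+1) (by omega) (by omega)
  have hfa : (β:ℝ) ^ EK * q ≤ a := by
    rw [hEK, ha_def]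
    have h1 : ((K:ℝ) * q) ≤ ((M:ℝ) ^ 2) := by exact_mod_cast hfm
    calc (β:ℝ) ^ (2*e) * K * q = (β:ℝ) ^ (2*e) * (K * q) := by ring
    _ ≤ (β:ℝ) ^ (2*e) * (M:ℝ) ^ 2 := by nlinarith [hB, h1]
  have hag : a ≤ (β:ℝ) ^ EK * (q+1:ℕ) := by
    rw [hEK, ha_def]
    have h1 : ((M:ℝ) ^ 2) ≤ (K:ℝ) * (q+1:ℕ) := by exact_mod_cast hgm.le
    calc (β:ℝ) ^ (2*e) * (M:ℝ)^2 ≤ (β:ℝ) ^ (2*e) * ((K:ℝ) * (q+1:ℕ)) := by nlinarith [hB, h1]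
    _ = (β:ℝ) ^ (2*e) * K * (q+1:ℕ) := by ring
  have htlo : a - fl1 a ≤ ((β:ℝ) ^ EK * (q+1:ℕ) - (β:ℝ) ^ EK * q) / 2 :=
    RTN.lower hfl1 hfF hgF hfa hag
  have hgf : (β:ℝ) ^ EK * (q+1:ℕ) - (β:ℝ) ^ EK * q = (β:ℝ) ^ EK := by push_cast; ring
  have htf : (β:ℝ) ^ EK * q ≤ fl1 a := RTN.le_fl hfl1 hfF hfa
  have ht0 : (0:ℝ) ≤ fl1 a := le_trans (by positivity) htf
  -- sqrt bound
  have hSr : ((S:ℝ)) < ((S+1:ℕ):ℝ) := by exact_mod_cast Nat.lt_succ_self S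
  have hlt : fl2 (Real.sqrt (fl1 a)) < (β:ℝ) ^ e * ((S+1:ℕ):ℝ) := by
    rw [ha_def, hseq]
    exact mul_lt_mul_of_pos_left hSr hA
  have hf' : ((β:ℝ) ^ e * ((S+1:ℕ):ℝ)) ∈ F := hmemE (S+1) (by omega) hS2
  have hmid := RTN.midpoint hfl2 hf' hlt
  rw [ha_def] at hseq
  rw [hseq] at hmid
  -- hmid : Real.sqrt (fl1 a) ≤ ((β:ℝ)^e * S + (β:ℝ)^e * (S+1:ℕ)) / 2
  have hmid2 : Real.sqrt (fl1 a) ≤ (β:ℝ) ^ e * (2*(S:ℝ)+1) / 2 := by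
    have : ((β:ℝ) ^ e * S + (β:ℝ) ^ e * ((S+1:ℕ):ℝ)) / 2 = (β:ℝ) ^ e * (2*(S:ℝ)+1) / 2 := by
      push_cast; ring
    linarith [hmid, this.le, this.ge]
  have htle : fl1 a ≤ ((β:ℝ) ^ e * (2*(S:ℝ)+1) / 2) ^ 2 := by
    have h1 : Real.sqrt (fl1 a) ^ 2 ≤ ((β:ℝ) ^ e * (2*(S:ℝ)+1) / 2) ^ 2 :=
      pow_le_pow_left₀ (Real.sqrt_nonneg _) hmid2 2
    rwa [Real.sq_sqrt ht0] at h1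
  have hsq : ((β:ℝ) ^ e) ^ 2 = (β:ℝ) ^ (2*e) := by
    rw [two_mul, zpow_add₀ hb0]; ring
  -- combine
  have hchain : (β:ℝ) ^ (2*e) * ((M:ℝ)^2 - (K:ℝ)/2) ≤ (β:ℝ) ^ (2*e) * ((2*(S:ℝ)+1)^2/4) := by
    have e1 : a - (β:ℝ) ^ EK / 2 ≤ fl1 a := by rw [hgf] at htlo; linarith
    have e2 : ((β:ℝ) ^ e * (2*(S:ℝ)+1) / 2) ^ 2 = (β:ℝ) ^ (2*e) * ((2*(S:ℝ)+1)^2/4) := by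
      rw [← hsq]; ring
    rw [hEK] at e1
    rw [e2] at htle
    rw [ha_def] at e1
    nlinarith [e1, htle]
  have h2 : (M:ℝ)^2 - (K:ℝ)/2 ≤ (2*(S:ℝ)+1)^2/4 := le_of_mul_le_mul_left hchain hB
  have hreal : 4*(M:ℝ)^2 ≤ (2*(S:ℝ)+1)^2 + 2*(K:ℝ) := by linarith
  exact_mod_cast hreal

end StarBound

section Core

variable {β μ : ℕ}

lemma binade_eq (hb1 : 1 < (β:ℝ)) {a b : ℤ} {y : ℝ}
    (h1 : (β:ℝ) ^ a ≤ y) (h2 : y < (β:ℝ) ^ (a+1))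
    (h3 : (β:ℝ) ^ b ≤ y) (h4 : y < (β:ℝ) ^ (b+1)) : a = b := by
  have e1 : (β:ℝ) ^ a < (β:ℝ) ^ (b+1) := lt_of_le_of_lt h1 h4
  have e2 : (β:ℝ) ^ b < (β:ℝ) ^ (a+1) := lt_of_le_of_lt h3 h2
  have f1 := (zpow_lt_zpow_iff_right₀ hb1).1 e1
  have f2 := (zpow_lt_zpow_iff_right₀ hb1).1 e2
  omega

lemma Eset_le_one (hβ : 2 ≤ β) (hμ : 1 ≤ μ) {e : ℤ} {f : ℝ} (hf : f ∈ Eset β μ e)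
    (h : f < 1 + (((β:ℝ) ^ μ))⁻¹) : f ≤ 1 := by
  have hb1 : (1:ℝ) < (β:ℝ) := by exact_mod_cast hβ
  have hb0 : (β:ℝ) ≠ 0 := by positivity
  have hP0 : (0:ℝ) < (β:ℝ) ^ μ := by positivity
  obtain ⟨n, hn1, hn2, hne⟩ := Eset_spec hβ hf
  have hA : (0:ℝ) < (β:ℝ) ^ e := zpow_pos (by positivity) _
  have hcast : ((β ^ μ : ℕ) : ℝ) = (β:ℝ) ^ μ := by push_cast; ring
  have hcast1 : ((β ^ (μ+1) : ℕ) : ℝ) = (β:ℝ) ^ (μ+1) := by push_cast; ring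
  rcases lt_trichotomy e (-(μ:ℤ)) with he | he | he
  · -- f < β^(e+μ+1) ≤ 1
    have h1 : f < (β:ℝ) ^ e * (β:ℝ) ^ (μ+1:ℕ) := by
      rw [hne]
      have : (n:ℝ) < (β:ℝ) ^ (μ+1:ℕ) := by
        rw [← hcast1]; exact_mod_cast hn2
      nlinarith [hA, this]
    have h2 : (β:ℝ) ^ e * (β:ℝ) ^ (μ+1:ℕ) = (β:ℝ) ^ (e + (μ:ℤ) + 1) := by
      rw [← zpow_natCast (β:ℝ) (μ+1), ← zpow_add₀ hb0]
      congr 1; push_cast; ring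
    have h3 : (β:ℝ) ^ (e + (μ:ℤ) + 1) ≤ (β:ℝ) ^ (0:ℤ) :=
      zpow_le_zpow_right₀ hb1.le (by omega)
    simp only [zpow_zero] at h3
    linarith [h1, h2.le, h2.ge]
  · -- e = -μ
    subst he
    have hinv : (β:ℝ) ^ (-(μ:ℤ)) = ((β:ℝ) ^ μ)⁻¹ := by
      rw [zpow_neg, zpow_natCast]
    have h1 : (n:ℝ) < (β:ℝ) ^ μ + 1 := by
      have h2 : ((β:ℝ) ^ μ)⁻¹ * n < 1 + ((β:ℝ) ^ μ)⁻¹ := by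
        rw [hne, hinv] at h; exact h
      have h3 := mul_lt_mul_of_pos_left h2 hP0
      rw [← mul_assoc, mul_inv_cancel₀ (ne_of_gt hP0)] at h3
      have h4 : (β:ℝ)^μ * (1 + ((β:ℝ) ^ μ)⁻¹) = (β:ℝ)^μ + 1 := by
        field_simp
      rw [h4] at h3; linarith
  -- n ≤ β^μ
    have h5 : n ≤ β ^ μ := by
      have : (n:ℝ) < ((β ^ μ:ℕ):ℝ) + 1 := by rw [hcast]; exact h1
      exact_mod_cast Nat.lt_succ_iff.1 (by exact_mod_cast this)
    rw [hne, hinv]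
    have h6 : (n:ℝ) ≤ (β:ℝ) ^ μ := by rw [← hcast]; exact_mod_cast h5
    calc ((β:ℝ) ^ μ)⁻¹ * n ≤ ((β:ℝ) ^ μ)⁻¹ * (β:ℝ)^μ := by
          exact mul_le_mul_of_nonneg_left h6 (by positivity)
    _ = 1 := inv_mul_cancel₀ (ne_of_gt hP0)
  · -- e ≥ -μ + 1 : f ≥ β ≥ 2, contradiction
    exfalso
    have h1 : (β:ℝ) ^ (e + (μ:ℤ)) ≤ f := by
      rw [hne]
      have h2 : (β:ℝ) ^ μ ≤ (n:ℝ) := by rw [← hcast]; exact_mod_cast hn1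
      have : (β:ℝ) ^ (e + (μ:ℤ)) = (β:ℝ) ^ e * (β:ℝ) ^ μ := by
        rw [zpow_add₀ hb0, zpow_natCast]
      rw [this]
      nlinarith [hA, h2]
    have h3 : (β:ℝ) ^ (1:ℤ) ≤ (β:ℝ) ^ (e + (μ:ℤ)) :=
      zpow_le_zpow_right₀ hb1.le (by omega)
    have h4 : ((β:ℝ) ^ μ)⁻¹ ≤ 1 := by
      rw [inv_le_one_iff₀]; right
      calc (1:ℝ) ≤ (β:ℝ) := hb1.le
      _ ≤ (β:ℝ)^μ := by exact_mod_cast Nat.le_self_pow (by omega) β -- fix later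
    simp only [zpow_one] at h3
    have : (2:ℝ) ≤ (β:ℝ) := by exact_mod_cast hβ
    linarith

end Core

section MainCore

variable {β μ : ℕ}

lemma core (hβ : 2 ≤ β) (hμ : 1 ≤ μ)
    (F : Set ℝ) (ν : ℝ) (hν1 : ν < 1)
    (ok : ℤ → Prop)
    (hoksucc : ∀ E, ok E → ok (E+1))
    (hmem : ∀ (E:ℤ) (n:ℕ), ok E → β ^ μ ≤ n → n < β ^ (μ+1) → ((β:ℝ) ^ E * n) ∈ F)
    (hν_ok : ∀ E:ℤ, ν < (β:ℝ) ^ (E + μ + 1) → ok E)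
    (hν_pow : ∀ E:ℤ, ok E → ν ≤ (β:ℝ) ^ (E + μ))
    (hrep0 : ∀ y ∈ F, 0 < y → ν ≤ y →
      ∃ (e:ℤ) (n:ℕ), ok e ∧ β ^ μ ≤ n ∧ n < β ^ (μ+1) ∧ y = (β:ℝ) ^ e * n)
    (hsmall : ∀ f ∈ F, f < 1 + (((β:ℝ) ^ μ))⁻¹ → f ≤ 1)
    (fl1 fl2 fl3 : ℝ → ℝ) (hfl1 : RTN F fl1) (hfl2 : RTN F fl2) (hfl3 : RTN F fl3)
    (m : ℝ) (hm : m ∈ F) (hm0 : 0 < m) (hm2ν : ν ≤ m ^ 2) :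
    fl3 (m / fl2 (Real.sqrt (fl1 (m ^ 2)))) ≤ 1 := by
  have hb1 : (1:ℝ) < (β:ℝ) := by exact_mod_cast hβ
  have hb0 : (β:ℝ) ≠ 0 := by positivity
  have hbR : (0:ℝ) < β := by positivity
  have hcastμ : ((β ^ μ : ℕ) : ℝ) = (β:ℝ) ^ μ := by push_cast; ring
  have hPβ : β ≤ β ^ μ := by
    calc β = β^1 := (pow_one β).symm
    _ ≤ β^μ := Nat.pow_le_pow_right (by omega) hμ
  have hPnat2 : 2 ≤ β ^ μ := le_trans hβ hPβ
  -- auxiliary membership including the top mantissa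
  have hmem' : ∀ (E:ℤ) (n:ℕ), ok E → β ^ μ ≤ n → n ≤ β ^ (μ+1) → ((β:ℝ) ^ E * n) ∈ F := by
    intro E n hok h1 h2
    rcases eq_or_lt_of_le h2 with hEq | hlt
    · have hkey : (β:ℝ) ^ E * (n:ℝ) = (β:ℝ) ^ (E+1) * ((β ^ μ : ℕ):ℝ) := by
        rw [hEq]; push_cast
        rw [zpow_add₀ hb0, zpow_one, pow_succ]
        ring
      rw [hkey]
      exact hmem (E+1) (β ^ μ) (hoksucc E hok) le_rfl (Nat.pow_lt_pow_succ (by omega))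
    · exact hmem E n hok h1 hlt
  -- 1 ∈ F
  have hone : (1:ℝ) ∈ F := by
    have hok : ok (-(μ:ℤ)) := by
      apply hν_ok
      have h0 : (-(μ:ℤ) + μ + 1) = 1 := by ring
      rw [h0, zpow_one]; linarith
    have h1 := hmem (-(μ:ℤ)) (β ^ μ) hok le_rfl (Nat.pow_lt_pow_succ (by omega))
    have h2 : (β:ℝ) ^ (-(μ:ℤ)) * ((β ^ μ : ℕ):ℝ) = 1 := by
      rw [hcastμ, zpow_neg, zpow_natCast, inv_mul_cancel₀ (by positivity)]
    rwa [h2] at h1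
  -- fl3 z ≤ 1 whenever z ≤ 1
  have hfinish_le : ∀ z : ℝ, z ≤ 1 → fl3 z ≤ 1 := by
    intro z hz
    have h1 := (hfl3 z).2 1 hone
    have h2 : |1 - z| = 1 - z := abs_of_nonneg (by linarith)
    have h3 : fl3 z - z ≤ |fl3 z - z| := le_abs_self _
    linarith
  -- ν ≤ m
  have hνm : ν ≤ m := by
    by_contra hcon
    push_neg at hcon
    nlinarith [hm2ν, hm0, hν1, hcon]
  obtain ⟨e, M, hoke, hM1, hM2, hmeq⟩ := hrep0 m hm hm0 hνm
  have hA : (0:ℝ) < (β:ℝ) ^ e := zpow_pos hbR _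
  have hB : (0:ℝ) < (β:ℝ) ^ (2*e) := zpow_pos hbR _
  have hm2eq : m ^ 2 = (β:ℝ) ^ (2*e) * (M:ℝ) ^ 2 := by
    rw [hmeq, two_mul, zpow_add₀ hb0]; ring
  set s : ℝ := fl2 (Real.sqrt (fl1 (m ^ 2))) with hsdef
  by_cases hms : m ≤ s
  · -- easy branch
    have hs0 : 0 < s := lt_of_lt_of_le hm0 hms
    exact hfinish_le _ ((div_le_one hs0).2 hms)
  push_neg at hms
  -- bounds on m
  have hcast_eμ1 : (β:ℝ) ^ (e + (μ:ℤ) + 1) = (β:ℝ) ^ e * ((β ^ (μ+1):ℕ):ℝ) := by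
    push_cast
    rw [← zpow_natCast (β:ℝ) (μ+1), ← zpow_add₀ hb0]
    congr 1; push_cast; ring
  have hmlt : m < (β:ℝ) ^ (e + (μ:ℤ) + 1) := by
    have h1 : (M:ℝ) < ((β ^ (μ+1):ℕ):ℝ) := by exact_mod_cast hM2
    rw [hmeq, hcast_eμ1]
    nlinarith [hA, h1]
  -- choose binade of M^2
  obtain ⟨c, hlow, hhigh, hcase⟩ :
      ∃ c : ℕ, β ^ (μ+c) * β ^ μ ≤ M ^ 2 ∧ M ^ 2 < β ^ (μ+c) * β ^ (μ+1) ∧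
        ((c = 0 ∧ M ^ 2 < β ^ (2*μ+1)) ∨ (c = 1 ∧ β ^ (2*μ+1) ≤ M ^ 2)) := by
    by_cases hc : M ^ 2 < β ^ (2*μ+1)
    · refine ⟨0, ?_, ?_, Or.inl ⟨rfl, hc⟩⟩
      · have h1 : β ^ (μ+0) * β ^ μ = β ^ μ * β ^ μ := by norm_num
        rw [h1]
        calc β ^ μ * β ^ μ ≤ M * M := Nat.mul_le_mul hM1 hM1
        _ = M ^ 2 := (sq M).symm
      · have h1 : β ^ (μ+0) * β ^ (μ+1) = β ^ (2*μ+1) := by rw [← pow_add]; congr 1; omega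
        omega
    · push_neg at hc
      refine ⟨1, ?_, ?_, Or.inr ⟨rfl, hc⟩⟩
      · have h1 : β ^ (μ+1) * β ^ μ = β ^ (2*μ+1) := by rw [← pow_add]; congr 1; omega
        omega
      · have h1 : β ^ (μ+1) * β ^ (μ+1) = β ^ (2*μ+2) := by rw [← pow_add]; congr 1; omega
        have h2 : M * M < β ^ (μ+1) * β ^ (μ+1) := Nat.mul_lt_mul'' hM2 hM2
        calc M ^ 2 = M * M := sq M
        _ < β ^ (μ+1) * β ^ (μ+1) := h2
  set K : ℕ := β ^ (μ+c) with hK_def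
  have hK0 : 0 < K := by positivity
  set EK : ℤ := 2*e + μ + c with hEK_def
  have hEK : (β:ℝ) ^ EK = (β:ℝ) ^ (2*e) * (K:ℝ) := by
    rw [hEK_def, hK_def]
    push_cast
    rw [← zpow_natCast (β:ℝ) (μ+c), ← zpow_add₀ hb0]
    congr 1; push_cast; ring
  have hokK : ok EK := by
    apply hν_ok
    have h1 : (β:ℝ) ^ (EK + μ + 1) = (β:ℝ) ^ (2*e) * (((β^(μ+c) * β^(μ+1) : ℕ)):ℝ) := by
      push_cast
      rw [← zpow_natCast (β:ℝ) (μ+c), ← zpow_natCast (β:ℝ) (μ+1), ← zpow_add₀ hb0,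
        ← zpow_add₀ hb0]
      congr 1; push_cast [hEK_def]; ring
    have h2 : ((M:ℝ))^2 < ((β^(μ+c) * β^(μ+1) : ℕ):ℝ) := by exact_mod_cast hhigh
    have h3 : m^2 < (β:ℝ) ^ (EK + μ + 1) := by
      rw [hm2eq, h1]
      nlinarith [hB, h2]
    linarith [hm2ν]
  -- lower bound for t and sqrt t
  have hf0F : ((β:ℝ) ^ EK * ((β ^ μ:ℕ):ℝ)) ∈ F :=
    hmem EK (β ^ μ) hokK le_rfl (Nat.pow_lt_pow_succ (by omega))
  have hf0m : (β:ℝ) ^ EK * ((β ^ μ:ℕ):ℝ) ≤ m ^ 2 := by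
    rw [hm2eq, hEK]
    have h1 : ((K * β ^ μ:ℕ):ℝ) ≤ (M:ℝ)^2 := by exact_mod_cast hlow
    push_cast at h1 ⊢
    nlinarith [hB, h1]
  have htf0 : (β:ℝ) ^ EK * ((β ^ μ:ℕ):ℝ) ≤ fl1 (m^2) := RTN.le_fl hfl1 hf0F hf0m
  have hsqK : ((β:ℝ) ^ (e + (μ:ℤ)))^2 ≤ (β:ℝ) ^ EK * ((β ^ μ:ℕ):ℝ) := by
    have h1 : ((β:ℝ) ^ (e + (μ:ℤ)))^2 = (β:ℝ) ^ (2*e) * ((β:ℝ)^μ * (β:ℝ)^μ) := by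
      rw [sq, ← zpow_add₀ hb0, two_mul, zpow_add₀ hb0, zpow_add₀ hb0, zpow_add₀ hb0,
        zpow_natCast]
      ring
    have h2 : (β:ℝ)^μ ≤ (K:ℝ) := by
      rw [hK_def]; push_cast
      exact pow_le_pow_right₀ hb1.le (by omega)
    rw [h1, hEK, hcastμ]
    have h3 : (0:ℝ) < (β:ℝ)^μ := by positivity
    nlinarith [hB, h2, h3]
  have hsqrt_ge : (β:ℝ) ^ (e + (μ:ℤ)) ≤ Real.sqrt (fl1 (m^2)) := by
    have h0 : (0:ℝ) ≤ (β:ℝ) ^ (e + (μ:ℤ)) := le_of_lt (zpow_pos hbR _)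
    have h1 : ((β:ℝ) ^ (e + (μ:ℤ)))^2 ≤ fl1 (m^2) := le_trans hsqK htf0
    calc (β:ℝ) ^ (e + (μ:ℤ)) = Real.sqrt (((β:ℝ) ^ (e + (μ:ℤ)))^2) := (Real.sqrt_sq h0).symm
    _ ≤ Real.sqrt (fl1 (m^2)) := Real.sqrt_le_sqrt h1
  -- lower bound for s
  have heμF : ((β:ℝ) ^ e * ((β ^ μ:ℕ):ℝ)) ∈ F :=
    hmem e (β ^ μ) hoke le_rfl (Nat.pow_lt_pow_succ (by omega))
  have heμ_eq : (β:ℝ) ^ e * ((β ^ μ:ℕ):ℝ) = (β:ℝ) ^ (e + (μ:ℤ)) := by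
    rw [hcastμ, ← zpow_natCast (β:ℝ) μ, ← zpow_add₀ hb0]
  have hs_ge : (β:ℝ) ^ (e + (μ:ℤ)) ≤ s := by
    have h9 : (β:ℝ) ^ e * ((β ^ μ:ℕ):ℝ) ≤ Real.sqrt (fl1 (m ^ 2)) := by
      rw [heμ_eq]; exact hsqrt_ge
    have h10 := RTN.le_fl hfl2 heμF h9
    rw [heμ_eq] at h10
    exact h10
  have hs0 : 0 < s := lt_of_lt_of_le (zpow_pos hbR _) hs_ge
  have hνs : ν ≤ s := le_trans (hν_pow e hoke) hs_ge
  -- representation of s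
  obtain ⟨e₂, S, hoke₂, hS1, hS2, hseq⟩ :=
    hrep0 s ((hfl2 (Real.sqrt (fl1 (m ^ 2)))).1) hs0 hνs
  -- binade of s is e
  have hee : e₂ = e := by
    have hA₂ : (0:ℝ) < (β:ℝ) ^ e₂ := zpow_pos hbR _
    have hb2 : (β:ℝ) ^ (e₂ + (μ:ℤ)) ≤ s := by
      have h1 : ((β ^ μ:ℕ):ℝ) ≤ (S:ℝ) := by exact_mod_cast hS1
      have h2 : (β:ℝ) ^ (e₂ + (μ:ℤ)) = (β:ℝ) ^ e₂ * ((β ^ μ:ℕ):ℝ) := by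
        rw [hcastμ, ← zpow_natCast (β:ℝ) μ, ← zpow_add₀ hb0]
      rw [h2, hseq]
      nlinarith [hA₂, h1]
    have hb3 : s < (β:ℝ) ^ (e₂ + (μ:ℤ) + 1) := by
      have h1 : (S:ℝ) < ((β ^ (μ+1):ℕ):ℝ) := by exact_mod_cast hS2
      have h2 : (β:ℝ) ^ (e₂ + (μ:ℤ) + 1) = (β:ℝ) ^ e₂ * ((β ^ (μ+1):ℕ):ℝ) := by
        push_cast
        rw [← zpow_natCast (β:ℝ) (μ+1), ← zpow_add₀ hb0]
        congr 1; push_cast; ring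
      rw [h2, hseq]
      nlinarith [hA₂, h1]
    have hb4 : s < (β:ℝ) ^ (e + (μ:ℤ) + 1) := lt_trans hms hmlt
    have h5 : e₂ + (μ:ℤ) = e + (μ:ℤ) := binade_eq hb1 hb2 hb3 hs_ge hb4
    omega
  subst hee
  -- S < M
  have hSM : S < M := by
    have h1 : (β:ℝ) ^ e₂ * (S:ℝ) < (β:ℝ) ^ e₂ * (M:ℝ) := by
      rw [← hseq, ← hmeq]; exact hms
    have h2 : (S:ℝ) < (M:ℝ) := lt_of_mul_lt_mul_left h1 (le_of_lt (zpow_pos hbR _))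
    exact_mod_cast h2
  -- the star bound
  have hstar : 4 * M ^ 2 ≤ (2*S+1) ^ 2 + 2 * K := by
    apply star_bound hβ F fl1 fl2 hfl1 hfl2 e₂ EK M S K hEK hK0
    · intro n h1 h2; exact hmem' EK n hokK h1 h2
    · intro n h1 h2; exact hmem' e₂ n hoke h1 h2
    · rw [hK_def]; exact hlow
    · rw [hK_def]; exact hhigh
    · exact hS1
    · omega
    · rw [← hm2eq]; exact hseq
  -- finish by cases
  rcases hcase with ⟨hc0, hcsmall⟩ | ⟨hc1, hcbig⟩
  · -- c = 0 : contradiction with s < m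
    exfalso
    have hKP : K = β ^ μ := by rw [hK_def, hc0]; norm_num
    rw [hKP] at hstar
    have hM' : (S+1)^2 ≤ M^2 := Nat.pow_le_pow_left (by omega) 2
    have hPS : β ^ μ ≤ S := hS1
    zify at hstar hM' hPS hPnat2
    nlinarith [hstar, hM', hPS, hPnat2]
  · -- c = 1
    have hKP : K = β ^ (μ+1) := by rw [hK_def, hc1]
    rcases eq_or_lt_of_le hcbig with hEq | hGt
    · -- M^2 = β^(2μ+1) exactly : then m² ∈ F and s = m, contradiction
      exfalso
      have hm2F : m ^ 2 ∈ F := by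
        have h1 : m ^ 2 = (β:ℝ) ^ EK * ((β ^ μ:ℕ):ℝ) := by
          rw [hm2eq, hEK, hKP]
          have h2 : ((M:ℝ))^2 = ((β ^ (2*μ+1):ℕ):ℝ) := by exact_mod_cast hEq.symm
          rw [h2]; push_cast
          rw [show 2*μ+1 = (μ+1)+μ from by omega, pow_add]
          ring
        rw [h1]
        exact hf0F
      have ht_eq : fl1 (m ^ 2) = m ^ 2 := RTN.fl_eq hfl1 hm2F
      have hsq_eq : Real.sqrt (fl1 (m ^ 2)) = m := by
        rw [ht_eq]; exact Real.sqrt_sq hm0.le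
      have hs_eq : s = m := by
        rw [hsdef, hsq_eq]; exact RTN.fl_eq hfl2 hm
      linarith [hms, hs_eq.ge, hs_eq.le]
    · -- the generic hard case
      have hkeyZ : 2 * ((β:ℤ) ^ μ) * M < 2 * ((β:ℤ) ^ μ) * S + S := by
        have h1 : ((β:ℤ)) * ((β:ℤ) ^ μ) ^ 2 < (M:ℤ) ^ 2 := by
          have : β * (β ^ μ)^2 = β ^ (2*μ+1) := by
            rw [← pow_mul, ← pow_succ']
            congr 1; omega
          zify at hGt ⊢
          push_cast [← this] at hGt ⊢
          linarith [hGt]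
        have h2 : 4 * (M:ℤ) ^ 2 ≤ (2*(S:ℤ)+1) ^ 2 + 2 * ((β:ℤ) * (β:ℤ)^μ) := by
          have h3 : ((β:ℤ))*((β:ℤ))^μ = ((β ^ (μ+1):ℕ):ℤ) := by push_cast; ring
          rw [h3, ← hKP]
          exact_mod_cast hstar
        exact arith_key ((β:ℤ)) ((β:ℤ)^μ) (S:ℤ) (M:ℤ) (by exact_mod_cast hβ)
          (by exact_mod_cast hPβ) (by exact_mod_cast hS1) (by exact_mod_cast hSM) h1 h2
      -- final rounding argument
      set z : ℝ := m / s with hz_def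
      have hPR : (0:ℝ) < (β:ℝ) ^ μ := by positivity
      have hSR : (0:ℝ) < (S:ℝ) := by
        have : 0 < S := by omega
        exact_mod_cast this
      have hz_eq : z = (M:ℝ) / (S:ℝ) := by
        rw [hz_def, hmeq, hseq, mul_div_mul_left _ _ (ne_of_gt (zpow_pos hbR e₂))]
      have hkeyR : 2 * (β:ℝ) ^ μ * (M:ℝ) < 2 * (β:ℝ) ^ μ * (S:ℝ) + (S:ℝ) := by
        exact_mod_cast hkeyZ
      have hzlt : z < (2*(β:ℝ)^μ + 1) / (2*(β:ℝ)^μ) := by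
        rw [hz_eq]
        rw [div_lt_div_iff₀ hSR (by positivity)]
        nlinarith [hkeyR]
      have hz1 : 1 < z := by
        rw [hz_eq]
        have h1 : (S:ℝ) < (M:ℝ) := by exact_mod_cast hSM
        rw [lt_div_iff₀ hSR]; linarith
      have h1 := (hfl3 z).2 1 hone
      have h2 : |1 - z| = z - 1 := by rw [abs_sub_comm]; exact abs_of_nonneg (by linarith)
      have h3 : fl3 z - z ≤ |fl3 z - z| := le_abs_self _
      have h4 : fl3 z ≤ 2*z - 1 := by linarith
      have hthr : 2*((2*(β:ℝ)^μ + 1) / (2*(β:ℝ)^μ)) - 1 = 1 + ((β:ℝ)^μ)⁻¹ := by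
        field_simp
        ring
      have h5 : fl3 z < 1 + ((β:ℝ)^μ)⁻¹ := by
        rw [← hthr]
        have : 2*z - 1 < 2*((2*(β:ℝ)^μ + 1) / (2*(β:ℝ)^μ)) - 1 := by linarith [hzlt]
        linarith
      exact hsmall (fl3 z) ((hfl3 z).1) h5

end MainCore


section Inst

variable {β μ : ℕ}

lemma main_glue (hβ : 2 ≤ β) (hμ : 1 ≤ μ)
    (F : Set ℝ) (ν : ℝ) (hν1 : ν < 1)
    (ok : ℤ → Prop)
    (hoksucc : ∀ E, ok E → ok (E+1))
    (hmem : ∀ (E:ℤ) (n:ℕ), ok E → β ^ μ ≤ n → n < β ^ (μ+1) → ((β:ℝ) ^ E * n) ∈ F)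
    (hν_ok : ∀ E:ℤ, ν < (β:ℝ) ^ (E + μ + 1) → ok E)
    (hν_pow : ∀ E:ℤ, ok E → ν ≤ (β:ℝ) ^ (E + μ))
    (hrep0 : ∀ y ∈ F, 0 < y → ν ≤ y →
      ∃ (e:ℤ) (n:ℕ), ok e ∧ β ^ μ ≤ n ∧ n < β ^ (μ+1) ∧ y = (β:ℝ) ^ e * n)
    (hsmall : ∀ f ∈ F, f < 1 + (((β:ℝ) ^ μ))⁻¹ → f ≤ 1)
    (hzero : (0:ℝ) ∈ F)
    (hneg : ∀ f ∈ F, -f ∈ F)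
    (fl1 fl2 fl3 : ℝ → ℝ) (hfl1 : RTN F fl1) (hfl2 : RTN F fl2) (hfl3 : RTN F fl3)
    (x : ℝ) (hx : x ∈ F) (hx2 : ν ≤ x ^ 2) :
    fl3 (|x| / fl2 (Real.sqrt (fl1 (x ^ 2)))) ≤ 1 := by
  by_cases hx0 : x = 0
  · subst hx0
    have h1 : ((0:ℝ))^2 = 0 := by norm_num
    rw [abs_zero, h1, RTN.fl_eq hfl1 hzero, Real.sqrt_zero, RTN.fl_eq hfl2 hzero, zero_div,
      RTN.fl_eq hfl3 hzero]
    exact zero_le_one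
  · have hmF : |x| ∈ F := by
      rcases abs_cases x with ⟨h,_⟩ | ⟨h,_⟩
      · rw [h]; exact hx
      · rw [h]; exact hneg x hx
    have hm0 : 0 < |x| := abs_pos.2 hx0
    have key := core hβ hμ F ν hν1 ok hoksucc hmem hν_ok hν_pow hrep0 hsmall fl1 fl2 fl3
      hfl1 hfl2 hfl3 |x| hmF hm0 (by rw [sq_abs]; exact hx2)
    rw [show x ^ 2 = |x| ^ 2 from (sq_abs x).symm]
    exact key

end Inst

section Final

theorem stmt7 (β μ : ℕ) (hβ : 2 ≤ β) (hμ : 1 ≤ μ) (emin : ℤ)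
    (hemin : emin < -(μ : ℤ))
    (F : Set ℝ) (ν : ℝ)
    (hF : (F = PerfectF β μ ∧ ν = 0) ∨
          (F = IEEEF β μ emin ∧ ν = (β : ℝ) ^ (emin + μ)) ∨
          (F = MPFRF β μ emin ∧ ν = (β : ℝ) ^ (emin + μ)))
    (fl1 fl2 fl3 : ℝ → ℝ) (hfl1 : RTN F fl1) (hfl2 : RTN F fl2) (hfl3 : RTN F fl3)
    (x : ℝ) (hx : x ∈ F) (hx2 : ν ≤ x ^ 2) :
    fl3 (|x| / fl2 (Real.sqrt (fl1 (x ^ 2)))) ≤ 1 := by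
  have hb1 : (1:ℝ) < (β:ℝ) := by exact_mod_cast hβ
  have hb0 : (β:ℝ) ≠ 0 := by positivity
  have hνnormal1 : (β:ℝ) ^ (emin + (μ:ℤ)) < 1 := by
    have h1 : (β:ℝ) ^ (emin + (μ:ℤ)) < (β:ℝ) ^ (0:ℤ) :=
      zpow_lt_zpow_right₀ hb1 (by omega)
    simpa using h1
  have hsub_lt : ∀ r : ℕ, r < β ^ μ → (β:ℝ) ^ emin * r < (β:ℝ) ^ (emin + (μ:ℤ)) := by
    intro r hr
    have h1 : (r:ℝ) < ((β ^ μ : ℕ):ℝ) := by exact_mod_cast hr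
    have h2 : (β:ℝ) ^ (emin + (μ:ℤ)) = (β:ℝ) ^ emin * ((β ^ μ:ℕ):ℝ) := by
      push_cast
      rw [← zpow_natCast (β:ℝ) μ, ← zpow_add₀ hb0]
    rw [h2]
    exact mul_lt_mul_of_pos_left h1 (zpow_pos (by positivity) _)
  rcases hF with ⟨hFe, hνe⟩ | ⟨hFe, hνe⟩ | ⟨hFe, hνe⟩
  · -- Perfect
    subst hFe; subst hνe
    refine main_glue hβ hμ _ 0 one_pos (fun _ => True) (fun _ _ => trivial)
      ?_ (fun _ _ => trivial) ?_ ?_ ?_ ?_ ?_ fl1 fl2 fl3 hfl1 hfl2 hfl3 x hx hx2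
    · intro E n _ h1 h2
      exact Or.inr ⟨E, Or.inl (mem_Eset_of hβ h1 h2)⟩
    · intro E _
      exact le_of_lt (zpow_pos (by positivity) _)
    · rintro y (hy | ⟨e, hy | hy⟩) hy0 _
      · exact absurd hy0 (by rw [hy]; exact lt_irrefl 0)
      · obtain ⟨n, h1, h2, h3⟩ := Eset_spec hβ hy
        exact ⟨e, n, trivial, h1, h2, h3⟩
      · exact absurd hy0 (by have := Eset_pos hβ hy; intro h; linarith)
    · rintro f (hf | ⟨e, hf | hf⟩) hlt
      · rw [hf]; exact zero_le_one
      · exact Eset_le_one hβ hμ hf hlt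
      · have := Eset_pos hβ hf; linarith
    · exact Or.inl rfl
    · rintro f (hf | ⟨e, hf | hf⟩)
      · left; rw [hf]; ring
      · exact Or.inr ⟨e, Or.inr (by rwa [neg_neg])⟩
      · exact Or.inr ⟨e, Or.inl hf⟩
  · -- IEEE
    subst hFe; subst hνe
    refine main_glue hβ hμ _ _ hνnormal1 (fun E => emin ≤ E) (fun E h => by omega)
      ?_ ?_ ?_ ?_ ?_ ?_ ?_ fl1 fl2 fl3 hfl1 hfl2 hfl3 x hx hx2
    · intro E n hok h1 h2
      exact Or.inl (Or.inr ⟨E, hok, Or.inl (mem_Eset_of hβ h1 h2)⟩)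
    · intro E h
      have := (zpow_lt_zpow_iff_right₀ hb1).1 h
      omega
    · intro E hE
      exact zpow_le_zpow_right₀ hb1.le (by omega)
    · rintro y (( hy | ⟨e, he, hy | hy⟩) | ⟨r, hr1, hr2, hy | hy⟩) hy0 hνy
      · exact absurd hy0 (by rw [hy]; exact lt_irrefl 0)
      · obtain ⟨n, h1, h2, h3⟩ := Eset_spec hβ hy
        exact ⟨e, n, he, h1, h2, h3⟩
      · exact absurd hy0 (by have := Eset_pos hβ hy; intro h; linarith)
      · exfalso
        have := hsub_lt r hr2
        rw [← hy] at this
        linarith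
      · exfalso
        have hr0 : (0:ℝ) < (β:ℝ) ^ emin * r := by
          have : (1:ℝ) ≤ (r:ℝ) := by exact_mod_cast hr1
          have h2 : (0:ℝ) < (β:ℝ) ^ emin := zpow_pos (by positivity) _
          nlinarith
        rw [hy] at hy0
        linarith
    · rintro f ((hf | ⟨e, he, hf | hf⟩) | ⟨r, hr1, hr2, hf | hf⟩) hlt
      · rw [hf]; exact zero_le_one
      · exact Eset_le_one hβ hμ hf hlt
      · have := Eset_pos hβ hf; linarith
      · have := hsub_lt r hr2
        rw [← hf] at this
        linarith
      · have hr0 : (0:ℝ) < (β:ℝ) ^ emin * r := by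
          have h1 : (1:ℝ) ≤ (r:ℝ) := by exact_mod_cast hr1
          have h2 : (0:ℝ) < (β:ℝ) ^ emin := zpow_pos (by positivity) _
          nlinarith
        rw [hf]
        linarith
    · exact Or.inl (Or.inl rfl)
    · rintro f ((hf | ⟨e, he, hf | hf⟩) | ⟨r, hr1, hr2, hf | hf⟩)
      · left; left; rw [hf]; ring
      · exact Or.inl (Or.inr ⟨e, he, Or.inr (by rwa [neg_neg])⟩)
      · exact Or.inl (Or.inr ⟨e, he, Or.inl hf⟩)
      · exact Or.inr ⟨r, hr1, hr2, Or.inr (by rw [hf])⟩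
      · exact Or.inr ⟨r, hr1, hr2, Or.inl (by rw [hf]; ring)⟩
  · -- MPFR
    subst hFe; subst hνe
    refine main_glue hβ hμ _ _ hνnormal1 (fun E => emin ≤ E) (fun E h => by omega)
      ?_ ?_ ?_ ?_ ?_ ?_ ?_ fl1 fl2 fl3 hfl1 hfl2 hfl3 x hx hx2
    · intro E n hok h1 h2
      exact Or.inr ⟨E, hok, Or.inl (mem_Eset_of hβ h1 h2)⟩
    · intro E h
      have := (zpow_lt_zpow_iff_right₀ hb1).1 h
      omega
    · intro E hE
      exact zpow_le_zpow_right₀ hb1.le (by omega)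
    · rintro y (hy | ⟨e, he, hy | hy⟩) hy0 _
      · exact absurd hy0 (by rw [hy]; exact lt_irrefl 0)
      · obtain ⟨n, h1, h2, h3⟩ := Eset_spec hβ hy
        exact ⟨e, n, he, h1, h2, h3⟩
      · exact absurd hy0 (by have := Eset_pos hβ hy; intro h; linarith)
    · rintro f (hf | ⟨e, he, hf | hf⟩) hlt
      · rw [hf]; exact zero_le_one
      · exact Eset_le_one hβ hμ hf hlt
      · have := Eset_pos hβ hf; linarith
    · exact Or.inl rfl
    · rintro f (hf | ⟨e, he, hf | hf⟩)
      · left; rw [hf]; ring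
      · exact Or.inr ⟨e, he, Or.inr (by rwa [neg_neg])⟩
      · exact Or.inr ⟨e, he, Or.inl hf⟩

end Final
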